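/- (Exponential generating function of the Bell numbers, equation (gf_Bell_numbers)) For every real number z, the series ∑_{k=0}^{∞} (B_k / k!) · z^k converges and its sum equals exp(exp(z) − 1). -/

import Mathlib

/-- The Bell number `B_k`: the number of partitions of a `k`-element set. -/
def bellNumber (k : ℕ) : ℕ :=
  Fintype.card (Finpartition (Finset.univ : Finset (Fin k)))

open Finset

namespace BellAux

variable {α β : Type*} [Fintype α] [DecidableEq α] [DecidableEq β]

instance kerDecidable (f : α → β) : DecidableRel (Setoid.ker f).r :=
  fun a b => ‹DecidableEq β› (f a) (f b)

/-- The partition of `univ : Finset α` into the fibers of `f`. -/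
def fiberPartition (f : α → β) : Finpartition (Finset.univ : Finset α) :=
  Finpartition.ofSetoid (Setoid.ker f)

lemma mem_part_fiberPartition (f : α → β) {a b : α} :
    b ∈ (fiberPartition f).part a ↔ f a = f b :=
  Finpartition.mem_part_ofSetoid_iff_rel

lemma parts_eq_image_part (P : Finpartition (Finset.univ : Finset α)) :
    P.parts = Finset.univ.image P.part := by
  ext b
  simp only [Finset.mem_image, Finset.mem_univ, true_and]
  constructor
  · intro hb
    obtain ⟨a, ha⟩ := P.nonempty_of_mem_parts hb
    exact ⟨a, P.part_eq_of_mem hb ha⟩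
  · rintro ⟨a, rfl⟩
    exact P.part_mem.2 (Finset.mem_univ a)

/-- Choice of an element in a part of a partition. -/
noncomputable def partElt (P : Finpartition (Finset.univ : Finset α)) (b : P.parts) : α :=
  (P.nonempty_of_mem_parts b.2).choose

lemma partElt_mem (P : Finpartition (Finset.univ : Finset α)) (b : P.parts) :
    partElt P b ∈ (b : Finset α) :=
  (P.nonempty_of_mem_parts b.2).choose_spec

lemma sigma_mk_eq {P Q : Finpartition (Finset.univ : Finset α)} (h : P = Q)
    (g1 : P.parts ↪ β) (g2 : Q.parts ↪ β)
    (hg : ∀ (b : Finset α) (hb : b ∈ P.parts) (hb' : b ∈ Q.parts), g1 ⟨b, hb⟩ = g2 ⟨b, hb'⟩) :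
    (⟨P, g1⟩ : Σ R : Finpartition (Finset.univ : Finset α), (R.parts ↪ β)) = ⟨Q, g2⟩ := by
  subst h
  have : g1 = g2 := by
    ext b
    exact hg b.1 b.2 b.2
  rw [this]

variable [Fintype β]

/-- A function `α → β` is the same data as a finpartition of `α` (into the fibers) together
with an injection of the set of parts into `β`. -/
noncomputable def funEquivSigma :
    (α → β) ≃ Σ P : Finpartition (Finset.univ : Finset α), (P.parts ↪ β) where
  toFun f :=
    ⟨fiberPartition f,
      ⟨fun b => f (partElt (fiberPartition f) b), by
        intro b1 b2 hval
        have h2 : partElt (fiberPartition f) b2 ∈ (fiberPartition f).part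
            (partElt (fiberPartition f) b1) := (mem_part_fiberPartition f).2 hval
        have e1 : (fiberPartition f).part (partElt (fiberPartition f) b1) = (b1 : Finset α) :=
          (fiberPartition f).part_eq_of_mem b1.2 (partElt_mem _ b1)
        have e2 : (b1 : Finset α) = (b2 : Finset α) :=
          (fiberPartition f).eq_of_mem_parts b1.2 b2.2 (e1 ▸ h2) (partElt_mem _ b2)
        exact Subtype.ext e2⟩⟩
  invFun Pg := fun x => Pg.2 ⟨Pg.1.part x, Pg.1.part_mem.2 (Finset.mem_univ x)⟩
  left_inv f := by
    funext x
    exact ((mem_part_fiberPartition f).1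
      (partElt_mem _ ⟨(fiberPartition f).part x, (fiberPartition f).part_mem.2
        (Finset.mem_univ x)⟩)).symm
  right_inv := by
    rintro ⟨P, g⟩
    set f : α → β := fun x => g ⟨P.part x, P.part_mem.2 (Finset.mem_univ x)⟩ with hf
    have hpart : ∀ x : α, (fiberPartition f).part x = P.part x := by
      intro x
      ext c
      rw [mem_part_fiberPartition]
      constructor
      · intro h
        have : (⟨P.part x, P.part_mem.2 (Finset.mem_univ x)⟩ :
            P.parts) = ⟨P.part c, P.part_mem.2 (Finset.mem_univ c)⟩ := g.injective h
        have hpp : P.part x = P.part c := congrArg Subtype.val this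
        exact hpp ▸ P.mem_part (Finset.mem_univ c)
      · intro hc
        have : P.part c = P.part x :=
          (P.mem_part_iff_part_eq_part (Finset.mem_univ c) (Finset.mem_univ x)).1 hc
        simp only [hf, this]
    have hP : fiberPartition f = P := by
      apply Finpartition.ext
      rw [parts_eq_image_part, parts_eq_image_part P]
      exact Finset.image_congr fun x _ => hpart x
    refine sigma_mk_eq hP _ _ ?_
    intro b hb hb'
    show f (partElt (fiberPartition f) ⟨b, hb⟩) = g ⟨b, hb'⟩
    have hmem : partElt (fiberPartition f) ⟨b, hb⟩ ∈ b := partElt_mem _ ⟨b, hb⟩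
    have hpb : P.part (partElt (fiberPartition f) ⟨b, hb⟩) = b := P.part_eq_of_mem hb' hmem
    simp only [hf]
    congr 1
    exact Subtype.ext hpb

/-- Counting functions by their fiber partition. -/
theorem card_fun_eq :
    Fintype.card β ^ Fintype.card α =
      ∑ P : Finpartition (Finset.univ : Finset α),
        (Fintype.card β).descFactorial P.parts.card := by
  classical
  rw [← Fintype.card_fun, Fintype.card_congr funEquivSigma, Fintype.card_sigma]
  congr 1
  funext P
  rw [Fintype.card_embedding_eq, Fintype.card_coe]

theorem pow_eq (n k : ℕ) :
    n ^ k = ∑ P : Finpartition (Finset.univ : Finset (Fin k)),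
      n.descFactorial P.parts.card := by
  simpa using card_fun_eq (α := Fin k) (β := Fin n)

/-- The real exponential series. -/
lemma hasSum_exp_div (x : ℝ) :
    HasSum (fun n : ℕ => x ^ n / n.factorial) (Real.exp x) := by
  rw [Real.exp_eq_exp_ℝ]
  exact NormedSpace.expSeries_div_hasSum_exp x

lemma hasSum_descFactorial (c : ℕ) :
    HasSum (fun n : ℕ => (n.descFactorial c : ℝ) / n.factorial) (Real.exp 1) := by
  have key : ∀ m : ℕ, ((m + c).descFactorial c : ℝ) / (m + c).factorial
      = (1 : ℝ) ^ m / m.factorial := by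
    intro m
    have h1 : m + c - c = m := by omega
    have h2 : (m.factorial : ℕ) * (m + c).descFactorial c = (m + c).factorial := by
      have := Nat.factorial_mul_descFactorial (n := m + c) (k := c) (by omega)
      rwa [h1] at this
    have h2' : (m.factorial : ℝ) * ((m + c).descFactorial c : ℝ) = ((m + c).factorial : ℝ) := by
      exact_mod_cast congrArg Nat.cast h2
    rw [one_pow]
    rw [div_eq_div_iff (by positivity) (by positivity)]
    linarith [h2']
  have h : HasSum (fun m : ℕ => ((m + c).descFactorial c : ℝ) / (m + c).factorial)
      (Real.exp 1) := by
    simp only [key]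
    exact hasSum_exp_div 1
  rw [hasSum_nat_add_iff (f := fun n : ℕ => (n.descFactorial c : ℝ) / n.factorial) c] at h
  convert h using 1
  · rfl
  have hzero : ∀ i ∈ Finset.range c, ((i.descFactorial c : ℝ) / i.factorial) = 0 := by
    intro i hi
    rw [Nat.descFactorial_of_lt (Finset.mem_range.1 hi)]
    simp
  rw [Finset.sum_congr rfl hzero]
  simp

/-- Dobinski's formula as a `HasSum` statement. -/
lemma dobinski (k : ℕ) :
    HasSum (fun n : ℕ => ((n : ℝ) ^ k) / n.factorial) (Real.exp 1 * bellNumber k) := by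
  classical
  have hterm : ∀ n : ℕ, ((n : ℝ) ^ k) / n.factorial
      = ∑ P : Finpartition (Finset.univ : Finset (Fin k)),
          (n.descFactorial P.parts.card : ℝ) / n.factorial := by
    intro n
    rw [← Finset.sum_div]
    congr 1
    exact_mod_cast pow_eq n k
  have h : HasSum (fun n : ℕ => ∑ P : Finpartition (Finset.univ : Finset (Fin k)),
      (n.descFactorial P.parts.card : ℝ) / n.factorial)
      (∑ _P : Finpartition (Finset.univ : Finset (Fin k)), Real.exp 1) :=
    hasSum_sum (fun P _ => hasSum_descFactorial P.parts.card)
  simp only [← hterm] at h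
  convert h using 1
  rw [Finset.sum_const, Finset.card_univ, nsmul_eq_mul, mul_comm]
  simp [bellNumber]

end BellAux

set_option maxHeartbeats 1000000 in
/-- exponential generating function of the Bell numbers: for every real `z`,
the series `∑_{k=0}^∞ (B_k / k!) z^k` converges to `exp(exp z − 1)`. -/
theorem bell_exponential_generating_function (z : ℝ) :
    HasSum (fun k : ℕ => (bellNumber k : ℝ) / k.factorial * z ^ k)
      (Real.exp (Real.exp z - 1)) := by
  classical
  set g : ℕ × ℕ → ℝ := fun p => (p.1 : ℝ) ^ p.2 * z ^ p.2 / (p.1.factorial * p.2.factorial)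
    with hg_def
  -- summability of |g|
  have habs : ∀ p : ℕ × ℕ, |g p| =
      ((p.1 : ℝ) * |z|) ^ p.2 / p.2.factorial / p.1.factorial := by
    intro p
    rw [hg_def]
    rw [abs_div, abs_mul, abs_pow, abs_pow, Nat.abs_cast, abs_mul, Nat.abs_cast, Nat.abs_cast,
      mul_pow, div_div]
    ring
  have hrowabs : ∀ n : ℕ, HasSum (fun k : ℕ => |g (n, k)|)
      (Real.exp ((n : ℝ) * |z|) / n.factorial) := by
    intro n
    have h := (BellAux.hasSum_exp_div ((n : ℝ) * |z|)).div_const (n.factorial : ℝ)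
    have hfun : (fun k : ℕ => |g (n, k)|)
        = fun k : ℕ => ((n : ℝ) * |z|) ^ k / k.factorial / n.factorial := by
      funext k; exact habs (n, k)
    rw [hfun]
    exact h
  have hsumabs : Summable fun p : ℕ × ℕ => |g p| := by
    rw [summable_prod_of_nonneg (fun p => abs_nonneg _)]
    refine ⟨fun n => (hrowabs n).summable, ?_⟩
    apply Summable.congr (f := fun n : ℕ => Real.exp ((n : ℝ) * |z|) / n.factorial)
    · have h : HasSum (fun n : ℕ => Real.exp ((n : ℝ) * |z|) / n.factorial)
          (Real.exp (Real.exp |z|)) := by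
        have h := BellAux.hasSum_exp_div (Real.exp |z|)
        have hfun : (fun n : ℕ => Real.exp ((n : ℝ) * |z|) / n.factorial)
            = fun n : ℕ => (Real.exp |z|) ^ n / n.factorial := by
          funext n; rw [Real.exp_nat_mul]
        rw [hfun]; exact h
      exact h.summable
    · intro n
      exact ((hrowabs n).tsum_eq).symm
  have hg : Summable g := by
    apply Summable.of_abs hsumabs
  -- row sums identify the total sum
  have hrow : ∀ n : ℕ, HasSum (fun k : ℕ => g (n, k))
      (Real.exp ((n : ℝ) * z) / n.factorial) := by
    intro n
    have h := (BellAux.hasSum_exp_div ((n : ℝ) * z)).div_const (n.factorial : ℝ)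
    have hfun : (fun k : ℕ => g (n, k))
        = fun k : ℕ => ((n : ℝ) * z) ^ k / k.factorial / n.factorial := by
      funext k
      rw [hg_def]
      rw [mul_pow, div_div]
      ring
    rw [hfun]
    exact h
  have hrowsum : HasSum (fun n : ℕ => Real.exp ((n : ℝ) * z) / n.factorial)
      (Real.exp (Real.exp z)) := by
    have h := BellAux.hasSum_exp_div (Real.exp z)
    have hfun : (fun n : ℕ => Real.exp ((n : ℝ) * z) / n.factorial)
        = fun n : ℕ => (Real.exp z) ^ n / n.factorial := by
      funext n; rw [Real.exp_nat_mul]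
    rw [hfun]; exact h
  have hS : HasSum g (Real.exp (Real.exp z)) := by
    have h0 := hg.hasSum
    have h1 : HasSum (fun n : ℕ => Real.exp ((n : ℝ) * z) / n.factorial) (∑' p, g p) :=
      h0.prod_fiberwise hrow
    rwa [h1.unique hrowsum] at h0
  -- column sums via Dobinski
  have hgswap : HasSum (fun p : ℕ × ℕ => g (p.2, p.1)) (Real.exp (Real.exp z)) :=
    (Equiv.prodComm ℕ ℕ).hasSum_iff.2 hS
  have hcol : ∀ k : ℕ, HasSum (fun n : ℕ => g (n, k))
      (Real.exp 1 * bellNumber k * (z ^ k / k.factorial)) := by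
    intro k
    have h := (BellAux.dobinski k).mul_right (z ^ k / k.factorial)
    have hfun : (fun n : ℕ => g (n, k))
        = fun n : ℕ => ((n : ℝ) ^ k / n.factorial) * (z ^ k / k.factorial) := by
      funext n
      rw [hg_def, div_mul_div_comm]
    rw [hfun]
    exact h
  have hfinal : HasSum (fun k : ℕ => Real.exp 1 * bellNumber k * (z ^ k / k.factorial))
      (Real.exp (Real.exp z)) :=
    hgswap.prod_fiberwise fun k => hcol k
  have hdiv := hfinal.div_const (Real.exp 1)
  have hne : Real.exp 1 ≠ 0 := Real.exp_ne_zero 1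
  have hfun : (fun k : ℕ => Real.exp 1 * bellNumber k * (z ^ k / k.factorial) / Real.exp 1)
      = fun k : ℕ => (bellNumber k : ℝ) / k.factorial * z ^ k := by
    funext k
    field_simp
  rw [hfun] at hdiv
  have hval : Real.exp (Real.exp z) / Real.exp 1 = Real.exp (Real.exp z - 1) := by
    rw [Real.exp_sub]
  rwa [hval] at hdiv
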